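/- arXiv:1811.09884 — 3 statements merged into one kernel-verified Lean document; each statement's English description precedes it below -/
import Mathlib

section
/- For a real number a ≠ 0, the improper integral over ω from 0 to ∞ of ln((ω² + a²)/ω²) dω equals π|a|. -/
open MeasureTheory Real Filter Set

lemma bode_aux (b : ℝ) (hb : 0 < b) :
    ∫ ω in Set.Ioi (0 : ℝ), Real.log ((ω^2 + b^2) / ω^2) = π * b := by
  set F : ℝ → ℝ := fun ω => ω * Real.log ((ω^2 + b^2) / ω^2) + 2 * b * Real.arctan (ω / b) with hF
  have hF0 : F 0 = 0 := by simp [hF]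
  -- continuity at 0 within Ici 0
  have hcont : ContinuousWithinAt F (Ici 0) 0 := by
    rw [ContinuousWithinAt, hF0]
    have h1 : Tendsto (fun ω : ℝ => ω * Real.log ((ω^2 + b^2) / ω^2)) (nhdsWithin 0 (Ici 0)) (nhds 0) := by
      have heq : ∀ ω ∈ Ioi (0:ℝ), ω * Real.log ((ω^2 + b^2) / ω^2)
          = ω * Real.log (ω^2 + b^2) - 2 * (ω * Real.log ω) := by
        intro ω hω
        have hω' : (0:ℝ) < ω := hω
        rw [Real.log_div (by positivity) (by positivity), Real.log_pow]
        push_cast; ring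
      have ha : Tendsto (fun ω : ℝ => ω * Real.log (ω^2 + b^2)) (nhdsWithin 0 (Ioi 0)) (nhds 0) := by
        have : ContinuousAt (fun ω : ℝ => ω * Real.log (ω^2 + b^2)) 0 := by
          apply ContinuousAt.mul continuousAt_id
          apply Real.continuousAt_log (by positivity) |>.comp
          fun_prop
        simpa using this.continuousWithinAt.tendsto
      have hb2 : Tendsto (fun ω : ℝ => ω * Real.log ω) (nhdsWithin 0 (Ioi 0)) (nhds 0) := by
        have h := tendsto_log_mul_rpow_nhdsGT_zero one_pos
        exact h.congr (fun x => by rw [Real.rpow_one, mul_comm])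
      have := ha.sub ((hb2.const_mul 2))
      simp only [mul_zero, sub_zero] at this
      have h0 : Tendsto (fun ω : ℝ => ω * Real.log ((ω^2 + b^2) / ω^2)) (nhdsWithin 0 (Ioi 0)) (nhds 0) := by
        refine this.congr' ?_
        filter_upwards [self_mem_nhdsWithin] with ω hω
        rw [heq ω hω]
      -- from Ioi to Ici
      rw [show (Ici (0:ℝ)) = insert 0 (Ioi 0) by rw [Ioi_insert]]
      rw [nhdsWithin_insert]
      rw [tendsto_sup]
      constructor
      · simpa using tendsto_pure_nhds (fun ω : ℝ => ω * Real.log ((ω^2 + b^2) / ω^2)) 0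
      · exact h0
    have h2 : Tendsto (fun ω : ℝ => 2 * b * Real.arctan (ω / b)) (nhdsWithin 0 (Ici 0)) (nhds 0) := by
      have : ContinuousAt (fun ω : ℝ => 2 * b * Real.arctan (ω / b)) 0 :=
        (continuousAt_const.mul ((Real.continuous_arctan.continuousAt).comp
          (continuousAt_id.div_const b)))
      simpa using this.continuousWithinAt.tendsto
    simpa using h1.add h2
  have hderiv : ∀ ω ∈ Ioi (0:ℝ), HasDerivAt F (Real.log ((ω^2 + b^2) / ω^2)) ω := by
    intro ω hω
    have hω0 : (0:ℝ) < ω := hω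
    have hsum : (0:ℝ) < ω^2 + b^2 := by positivity
    have h1 : HasDerivAt (fun ω : ℝ => Real.log ((ω^2 + b^2) / ω^2)) 
        (2*ω/(ω^2+b^2) - 2/ω) ω := by
      have hl1 : HasDerivAt (fun ω : ℝ => Real.log (ω^2 + b^2)) (2*ω/(ω^2+b^2)) ω := by
        have : HasDerivAt (fun ω : ℝ => ω^2 + b^2) (2*ω) ω := by
          simpa using (hasDerivAt_pow 2 ω).add_const (b^2)
        simpa [div_eq_mul_inv] using this.log hsum.ne'
      have hl2 : HasDerivAt (fun ω : ℝ => Real.log (ω^2)) (2/ω) ω := by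
        have : HasDerivAt (fun ω : ℝ => ω^2) (2*ω) ω := by simpa using hasDerivAt_pow 2 ω
        have := this.log (by positivity)
        convert this using 1
        field_simp
      have := hl1.sub hl2
      refine this.congr_deriv rfl |>.congr_of_eventuallyEq ?_
      filter_upwards [eventually_gt_nhds hω0] with x hx
      rw [Real.log_div (by positivity) (by positivity)]; rfl
    have h2 : HasDerivAt (fun ω : ℝ => 2 * b * Real.arctan (ω / b)) (2*b^2/(ω^2+b^2)) ω := by
      have hd : HasDerivAt (fun ω : ℝ => ω / b) (1/b) ω := (hasDerivAt_id ω).div_const b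
      have := (hd.arctan).const_mul (2*b)
      refine this.congr_deriv ?_
      field_simp
      ring
    have hm : HasDerivAt (fun ω : ℝ => ω) 1 ω := hasDerivAt_id ω
    have hmul : HasDerivAt (fun ω : ℝ => ω * Real.log ((ω^2 + b^2) / ω^2))
        (1 * Real.log ((ω^2 + b^2) / ω^2) + ω * (2*ω/(ω^2+b^2) - 2/ω)) ω := hm.mul h1
    have := hmul.add h2
    refine this.congr_deriv ?_
    field_simp
    ring
  have hnonneg : ∀ ω ∈ Ioi (0:ℝ), 0 ≤ Real.log ((ω^2 + b^2) / ω^2) := by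
    intro ω hω
    have hω' : (0:ℝ) < ω := hω
    apply Real.log_nonneg
    rw [le_div_iff₀ (by positivity)]
    nlinarith [sq_nonneg b]
  have htop : Tendsto F atTop (nhds (π * b)) := by
    have h1 : Tendsto (fun ω : ℝ => ω * Real.log ((ω^2 + b^2) / ω^2)) atTop (nhds 0) := by
      have key : Tendsto (fun x : ℝ => x * Real.log (1 + b^2 / x)) atTop (nhds (b^2)) :=
        Real.tendsto_mul_log_one_add_div_atTop (b^2)
      have hsq : Tendsto (fun ω : ℝ => ω^2) atTop atTop := tendsto_pow_atTop two_ne_zero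
      have hcomp : Tendsto (fun ω : ℝ => ω^2 * Real.log (1 + b^2 / ω^2)) atTop (nhds (b^2)) :=
        key.comp hsq
      have hinv : Tendsto (fun ω : ℝ => ω⁻¹) atTop (nhds 0) := tendsto_inv_atTop_zero
      have := hcomp.mul hinv
      rw [mul_zero] at this
      refine this.congr' ?_
      filter_upwards [eventually_gt_atTop (0:ℝ)] with ω hω
      have : (ω^2 + b^2)/ω^2 = 1 + b^2/ω^2 := by field_simp
      rw [this]
      field_simp
    have h2 : Tendsto (fun ω : ℝ => 2 * b * Real.arctan (ω / b)) atTop (nhds (π * b)) := by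
      have : Tendsto (fun ω : ℝ => ω / b) atTop atTop := tendsto_id.atTop_div_const hb
      have := (Real.tendsto_arctan_atTop.mono_right nhdsWithin_le_nhds).comp this
      have h := (this.const_mul (2*b))
      have : (2*b) * (π/2) = π * b := by ring
      rw [this] at h
      exact h
    simpa using h1.add h2
  have := integral_Ioi_of_hasDerivAt_of_nonneg hcont hderiv hnonneg htop
  rw [this, hF0, sub_zero]

theorem sensitivity_bode_key_integral (a : ℝ) (ha : a ≠ 0) :
    ∫ ω in Set.Ioi (0 : ℝ), Real.log ((ω^2 + a^2) / ω^2) = π * |a| := by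
  have : ∀ ω : ℝ, Real.log ((ω^2 + a^2) / ω^2) = Real.log ((ω^2 + |a|^2) / ω^2) := by
    intro ω; rw [sq_abs]
  simp_rw [this]
  exact bode_aux |a| (abs_pos.mpr ha)
end

section
/- Let K ≠ 0 be real, z₁,…,z_m nonzero complex numbers, and r₁,…,r_n complex numbers with |rᵢ| < 1 for all i, with n ≥ m. Then (1/2π)·∫_{−π}^{π} log₂|K·∏ᵢ₌₁^m(e^{jω} − zᵢ)/∏ᵢ₌₁ⁿ(e^{jω} − rᵢ)| dω = Σ_{i : |zᵢ| > 1} log₂|zᵢ| + log₂|K|. -/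
open MeasureTheory Real Complex
open intervalIntegral

noncomputable def Gf (θ : ℝ) : ℝ := Real.log (‖1 - Complex.exp (θ * Complex.I)‖)

lemma Gf_abs (θ : ℝ) : ‖1 - Complex.exp (θ * Complex.I)‖ = 2 * |Real.sin (θ/2)| := by
  rw [Complex.norm_def, Complex.normSq_apply]
  have h1 : ((1 : ℂ) - Complex.exp (θ * Complex.I)).re = 1 - Real.cos θ := by
    simp [Complex.exp_ofReal_mul_I_re]
  have h2 : ((1 : ℂ) - Complex.exp (θ * Complex.I)).im = - Real.sin θ := by
    simp [Complex.exp_ofReal_mul_I_im]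
  rw [h1, h2]
  have h3 : (1 - Real.cos θ) * (1 - Real.cos θ) + -Real.sin θ * -Real.sin θ
      = (2 * Real.sin (θ/2))^2 := by
    have hs := Real.sin_sq_eq_half_sub (θ/2)
    have hc := Real.sin_sq_add_cos_sq θ
    have : 2 * (θ/2) = θ := by ring
    rw [this] at hs
    nlinarith [hs, hc]
  rw [h3, Real.sqrt_sq_eq_abs, abs_mul]
  norm_num

lemma Gf_even (θ : ℝ) : Gf (-θ) = Gf θ := by
  unfold Gf
  congr 1
  rw [Gf_abs, Gf_abs]
  rw [show (-θ)/2 = -(θ/2) by ring, Real.sin_neg, abs_neg]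

lemma Gf_periodic : Function.Periodic Gf (2*π) := by
  intro θ
  unfold Gf
  congr 3
  push_cast
  rw [add_mul, Complex.exp_add]
  simp [Complex.exp_two_pi_mul_I]

lemma Gf_meas : Measurable Gf := by
  apply Real.measurable_log.comp
  exact (continuous_norm.comp
    (continuous_const.sub (Complex.continuous_exp.comp
      (Complex.continuous_ofReal.mul continuous_const)))).measurable

lemma Gf_int_base : IntervalIntegrable Gf volume 0 π := by
  have hπ : (0:ℝ) < π := Real.pi_pos
  rw [intervalIntegrable_iff_integrableOn_Ioc_of_le hπ.le]
  have hg : IntervalIntegrable (fun θ : ℝ => 2 * Real.log π + 2 * θ ^ (-(1/2) : ℝ))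
      volume 0 π := by
    exact intervalIntegrable_const.add
      ((intervalIntegral.intervalIntegrable_rpow' (by norm_num)).const_mul 2)
  rw [intervalIntegrable_iff_integrableOn_Ioc_of_le hπ.le] at hg
  apply Integrable.mono' hg Gf_meas.aestronglyMeasurable
  rw [ae_restrict_iff' measurableSet_Ioc]
  filter_upwards with θ hθ
  obtain ⟨hθ0, hθπ⟩ := hθ
  have hs2 : 0 < θ/2 := by linarith
  have hs3 : θ/2 ≤ π/2 := by linarith
  have hsinpos : 0 < Real.sin (θ/2) := Real.sin_pos_of_pos_of_lt_pi hs2 (by linarith)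
  have hlow : θ/π ≤ 2 * Real.sin (θ/2) := by
    have := Real.mul_le_sin hs2.le hs3
    have h2 : 2/π * (θ/2) = θ/π := by ring
    rw [h2] at this
    nlinarith
  have hup : 2 * Real.sin (θ/2) ≤ θ := by
    have := Real.sin_le hs2.le
    linarith
  have hrpos : 0 < θ ^ (-(1/2) : ℝ) := Real.rpow_pos_of_pos hθ0 _
  have hlogpi : 0 ≤ Real.log π := Real.log_nonneg (by linarith [Real.pi_gt_three])
  -- |Gf θ| ≤ |log θ| + log π
  have hGval : Gf θ = Real.log (2 * Real.sin (θ/2)) := by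
    unfold Gf
    rw [Gf_abs, abs_of_pos hsinpos]
  have hθpos : 0 < θ/π := div_pos hθ0 hπ
  have hub : Gf θ ≤ Real.log θ := by
    rw [hGval]
    exact Real.log_le_log (by linarith) hup
  have hlb : Real.log θ - Real.log π ≤ Gf θ := by
    rw [hGval]
    have h4 : Real.log (θ/π) = Real.log θ - Real.log π := Real.log_div hθ0.ne' hπ.ne'
    have h5 : Real.log (θ/π) ≤ Real.log (2 * Real.sin (θ/2)) := Real.log_le_log hθpos hlow
    linarith
  have habsG : |Gf θ| ≤ |Real.log θ| + Real.log π := by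
    rw [abs_le]
    constructor
    · have : -|Real.log θ| ≤ Real.log θ := neg_abs_le _
      linarith
    · have : Real.log θ ≤ |Real.log θ| := le_abs_self _
      linarith
  have hlogθ : |Real.log θ| ≤ Real.log π + 2 * θ ^ (-(1/2) : ℝ) := by
    rcases le_or_gt 1 θ with h1 | h1
    · have hl : 0 ≤ Real.log θ := Real.log_nonneg h1
      rw [_root_.abs_of_nonneg hl]
      have : Real.log θ ≤ Real.log π := Real.log_le_log hθ0 hθπ
      linarith
    · have hl : Real.log θ ≤ 0 := Real.log_nonpos hθ0.le h1.le
      rw [_root_.abs_of_nonpos hl]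
      have key : Real.log (θ ^ (-(1/2) : ℝ)) = -(1/2) * Real.log θ :=
        Real.log_rpow hθ0 _
      have key2 : Real.log (θ ^ (-(1/2) : ℝ)) ≤ θ ^ (-(1/2) : ℝ) - 1 :=
        Real.log_le_sub_one_of_pos hrpos
      nlinarith
  calc ‖Gf θ‖ ≤ |Real.log θ| + Real.log π := habsG
    _ ≤ 2 * Real.log π + 2 * θ ^ (-(1/2) : ℝ) := by linarith

lemma Gf_int_big : IntervalIntegrable Gf volume (-(3*π)) (5*π) := by
  have base := Gf_int_base
  have hneg : IntervalIntegrable Gf volume (-π) 0 := by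
    have h := (IntervalIntegrable.iff_comp_neg).mp base
    have he : (fun x => Gf (-x)) = Gf := funext Gf_even
    rw [he] at h
    simpa using h.symm
  have base2 : IntervalIntegrable Gf volume (-π) π := hneg.trans base
  have hshift : ∀ c : ℝ, (fun x => Gf (x - 2*π*c)) = Gf → IntervalIntegrable Gf volume
      (-π + 2*π*c) (π + 2*π*c) := by
    intro c hc
    have h := base2.comp_sub_right (2*π*c)
    rwa [hc] at h
  have h1 : IntervalIntegrable Gf volume π (3*π) := by
    have := hshift 1 (funext fun x => by
      have := Gf_periodic (x - 2*π*1); simpa using this.symm)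
    have e1 : -π + 2*π*1 = π := by ring
    have e2 : π + 2*π*1 = 3*π := by ring
    rwa [e1, e2] at this
  have h2 : IntervalIntegrable Gf volume (3*π) (5*π) := by
    have := hshift 2 (funext fun x => by
      have ha := Gf_periodic (x - 2*π*2)
      have hb := Gf_periodic (x - 2*π*2 + 2*π)
      have e : x - 2*π*2 + 2*π + 2*π = x := by ring
      rw [e] at hb
      rw [ha] at hb
      exact hb.symm)
    have e1 : -π + 2*π*2 = 3*π := by ring
    have e2 : π + 2*π*2 = 5*π := by ring
    rwa [e1, e2] at this
  have hm1 : IntervalIntegrable Gf volume (-(3*π)) (-π) := by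
    have := hshift (-1) (funext fun x => by
      have := Gf_periodic x
      simpa [sub_neg_eq_add, mul_comm] using this)
    have e1 : -π + 2*π*(-1) = -(3*π) := by ring
    have e2 : π + 2*π*(-1) = -π := by ring
    rwa [e1, e2] at this
  exact ((hm1.trans base2).trans h1).trans h2

lemma Gf_int (a b : ℝ) (ha : a ∈ Set.Icc (-(3*π)) (5*π)) (hb : b ∈ Set.Icc (-(3*π)) (5*π)) :
    IntervalIntegrable Gf volume a b := by
  apply Gf_int_big.mono_set
  rw [Set.uIcc_subset_uIcc_iff_mem, Set.uIcc_of_le (by linarith [Real.pi_pos] : -(3*π) ≤ 5*π)]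
  exact ⟨ha, hb⟩

lemma countable_expEq (c : ℂ) : {θ : ℝ | Complex.exp (θ * Complex.I) = c}.Countable := by
  by_cases hne : ∃ θ₀ : ℝ, Complex.exp (θ₀ * Complex.I) = c
  · obtain ⟨θ₀, h0⟩ := hne
    apply Set.Countable.mono _ (Set.countable_range (fun n : ℤ => θ₀ + n * (2*π)))
    intro θ hθ
    simp only [Set.mem_setOf_eq] at hθ
    have hee : Complex.exp (θ * Complex.I) = Complex.exp (θ₀ * Complex.I) := hθ.trans h0.symm
    rw [Complex.exp_eq_exp_iff_exists_int] at hee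
    obtain ⟨n, hn⟩ := hee
    refine ⟨n, ?_⟩
    have h2 : (θ : ℂ) * Complex.I = ((θ₀ : ℝ) + n * (2*π) : ℝ) * Complex.I := by
      rw [hn]; push_cast; ring
    have h3 := mul_right_cancel₀ Complex.I_ne_zero h2
    have h4 : (θ : ℝ) = θ₀ + n * (2*π) := by exact_mod_cast h3
    exact h4.symm
  · convert Set.countable_empty
    rw [Set.eq_empty_iff_forall_notMem]
    intro θ hθ
    exact hne ⟨θ, hθ⟩

lemma Gf_zero : ∫ θ in (0:ℝ)..(2*π), Gf θ = 0 := by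
  have hπ := Real.pi_pos
  set Iv := ∫ θ in (0:ℝ)..(2*π), Gf θ with hIv
  have hint02 : IntervalIntegrable Gf volume 0 (2*π) :=
    Gf_int _ _ (by constructor <;> linarith) (by constructor <;> linarith)
  have hint24 : IntervalIntegrable Gf volume (2*π) (4*π) :=
    Gf_int _ _ (by constructor <;> linarith) (by constructor <;> linarith)
  have hintπ3 : IntervalIntegrable Gf volume π (3*π) :=
    Gf_int _ _ (by constructor <;> linarith) (by constructor <;> linarith)
  have hper24 : ∫ θ in (2*π)..(4*π), Gf θ = Iv := by
    have := Gf_periodic.intervalIntegral_add_eq (2*π) 0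
    rw [show (2*π) + 2*π = 4*π by ring, zero_add] at this
    exact this
  have h04 : ∫ θ in (0:ℝ)..(4*π), Gf θ = Iv + Iv := by
    rw [← intervalIntegral.integral_add_adjacent_intervals hint02 hint24, hper24]
  have step1 : ∫ θ in (0:ℝ)..(2*π), Gf (2*θ) = Iv := by
    rw [intervalIntegral.integral_comp_mul_left Gf (two_ne_zero)]
    norm_num
    rw [show (2:ℝ) * (2*π) = 4*π by ring, h04]
    ring
  have step2 : ∫ θ in (0:ℝ)..(2*π), Gf (θ + π) = Iv := by
    rw [intervalIntegral.integral_comp_add_right Gf π, zero_add,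
      show (2*π) + π = π + 2*π by ring]
    have := Gf_periodic.intervalIntegral_add_eq π 0
    rw [zero_add] at this
    exact this
  have hintshift : IntervalIntegrable (fun θ => Gf (θ + π)) volume 0 (2*π) := by
    have := hintπ3.comp_add_right π
    rw [show π - π = 0 by ring, show 3*π - π = 2*π by ring] at this
    exact this
  have step3 : ∫ θ in (0:ℝ)..(2*π), Gf (2*θ) =
      ∫ θ in (0:ℝ)..(2*π), (Gf θ + Gf (θ + π)) := by
    apply intervalIntegral.integral_congr_ae
    have hS : volume ({θ : ℝ | Complex.exp (θ * Complex.I) = 1} ∪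
        {θ : ℝ | Complex.exp (θ * Complex.I) = -1}) = 0 :=
      Set.Countable.measure_zero ((countable_expEq 1).union (countable_expEq (-1))) _
    filter_upwards [measure_eq_zero_iff_ae_notMem.mp hS] with θ hθ _
    simp only [Set.mem_union, Set.mem_setOf_eq, not_or] at hθ
    obtain ⟨hθ1, hθ2⟩ := hθ
    have he1 : (1:ℂ) - Complex.exp (θ * Complex.I) ≠ 0 := fun h => hθ1 (by
      have := sub_eq_zero.mp h; exact this.symm)
    have he2 : (1:ℂ) + Complex.exp (θ * Complex.I) ≠ 0 := fun h => hθ2 (by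
      have : Complex.exp (θ * Complex.I) = -1 := by linear_combination h
      exact this)
    have hdbl : ((2*θ : ℝ) : ℂ) * Complex.I = θ * Complex.I + θ * Complex.I := by
      push_cast; ring
    have hfac : (1:ℂ) - Complex.exp ((2*θ : ℝ) * Complex.I) =
        (1 - Complex.exp (θ * Complex.I)) * (1 + Complex.exp (θ * Complex.I)) := by
      rw [hdbl, Complex.exp_add]; ring
    have hhalf : ((θ + π : ℝ) : ℂ) * Complex.I = θ * Complex.I + π * Complex.I := by
      push_cast; ring
    have hfac2 : (1:ℂ) - Complex.exp ((θ + π : ℝ) * Complex.I) =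
        1 + Complex.exp (θ * Complex.I) := by
      rw [hhalf, Complex.exp_add, Complex.exp_pi_mul_I]; ring
    unfold Gf
    rw [hfac, hfac2, norm_mul, Real.log_mul (norm_ne_zero_iff.mpr he1) (norm_ne_zero_iff.mpr he2)]
  have hsum : ∫ θ in (0:ℝ)..(2*π), (Gf θ + Gf (θ + π)) = Iv + Iv := by
    rw [intervalIntegral.integral_add hint02 hintshift, step2]
  have : Iv = Iv + Iv := step1.symm.trans (step3.trans hsum)
  linarith


-- mean value lemma
lemma meanvalue (b : ℂ) (hb : ‖b‖ < 1) :
    ∫ θ in (0:ℝ)..(2*π), Real.log (‖1 - b * Complex.exp (θ * Complex.I)‖) = 0 := by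
  set f : ℂ → ℂ := fun w => Complex.log (1 - b * w) with hf
  have hne : ∀ w : ℂ, ‖w‖ ≤ 1 → 1 - b * w ∈ Complex.slitPlane := by
    intro w hw
    left
    have h1 : ‖b * w‖ < 1 := by
      rw [norm_mul]
      calc ‖b‖ * ‖w‖ ≤ ‖b‖ * 1 :=
        mul_le_mul_of_nonneg_left hw (norm_nonneg b)
      _ < 1 := by simpa using hb
    have h2 : |(b * w).re| ≤ ‖b * w‖ := Complex.abs_re_le_norm _
    have : (1 - b * w).re = 1 - (b * w).re := by simp
    rw [this]
    have := abs_le.mp h2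
    linarith
  have hdiff : ∀ w ∈ Metric.closedBall (0:ℂ) 1, DifferentiableAt ℂ f w := by
    intro w hw
    simp only [Metric.mem_closedBall, dist_zero_right] at hw
    have h1 : DifferentiableAt ℂ (fun w : ℂ => 1 - b * w) w :=
      (differentiableAt_const _).sub ((differentiableAt_id).const_mul _)
    exact (Complex.differentiableAt_log (hne w hw)).comp w h1
  have key := Complex.circleIntegral_sub_center_inv_smul_of_differentiable_on_off_countable
    (f := f) (c := 0) (R := 1) one_pos Set.countable_empty
    (fun w hw => (hdiff w hw).continuousAt.continuousWithinAt)
    (fun w hw => hdiff w (Metric.ball_subset_closedBall hw.1))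
  have hf0 : f 0 = 0 := by simp [hf]
  rw [hf0, smul_zero] at key
  -- unfold the circle integral
  rw [circleIntegral] at key
  simp only [deriv_circleMap, circleMap, Complex.ofReal_one, one_mul, zero_add, sub_zero,
    smul_eq_mul] at key
  have key2 : ∫ θ in (0:ℝ)..(2*π), Complex.I * f (Complex.exp (θ * Complex.I)) = 0 := by
    rw [← key]
    apply intervalIntegral.integral_congr
    intro θ _
    have hexp : Complex.exp (θ * Complex.I) ≠ 0 := Complex.exp_ne_zero _
    field_simp
  rw [intervalIntegral.integral_const_mul, mul_eq_zero] at key2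
  have key3 : ∫ θ in (0:ℝ)..(2*π), f (Complex.exp (θ * Complex.I)) = 0 :=
    key2.resolve_left Complex.I_ne_zero
  have hcont : Continuous fun θ : ℝ => f (Complex.exp (θ * Complex.I)) := by
    apply Continuous.clog
    · exact continuous_const.sub (continuous_const.mul
        (Complex.continuous_exp.comp ((Complex.continuous_ofReal.mul continuous_const))))
    · intro θ
      exact hne _ (le_of_eq (Complex.norm_exp_ofReal_mul_I θ))
  have hre : ∫ θ in (0:ℝ)..(2*π), (f (Complex.exp (θ * Complex.I))).re = 0 := by
    have h2 : (0:ℝ) ≤ 2*π := by positivity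
    rw [intervalIntegral.integral_of_le h2] at key3 ⊢
    have hint : Integrable (fun θ : ℝ => f (Complex.exp (θ * Complex.I)))
        (volume.restrict (Set.Ioc 0 (2*π))) := hcont.integrableOn_Ioc
    have := integral_re (𝕜 := ℂ) hint
    simp only [RCLike.re_eq_complex_re] at this
    rw [this, key3, Complex.zero_re]
  refine Eq.trans (intervalIntegral.integral_congr fun θ _ => ?_) hre
  rw [hf]
  exact (Complex.log_re _).symm

noncomputable def Ff (a : ℂ) (θ : ℝ) : ℝ := Real.log (‖Complex.exp (θ * Complex.I) - a‖)

lemma exp_unit (θ : ℝ) : ‖Complex.exp (θ * Complex.I)‖ = 1 :=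
  Complex.norm_exp_ofReal_mul_I θ

lemma Ff_eq_G (a : ℂ) (haa : ‖a‖ = 1) (θ : ℝ) :
    Ff a θ = Gf (θ - Complex.arg a) := by
  have ha : a = Complex.exp (Complex.arg a * Complex.I) := by
    have := Complex.norm_mul_exp_arg_mul_I a
    rw [haa] at this
    simpa using this.symm
  unfold Ff Gf
  congr 1
  have key : Complex.exp (θ * Complex.I) - a =
      -(Complex.exp ((Complex.arg a : ℝ) * Complex.I) *
        (1 - Complex.exp (((θ - Complex.arg a : ℝ)) * Complex.I))) := by
    rw [mul_sub, mul_one]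
    rw [← Complex.exp_add]
    push_cast
    rw [show (Complex.arg a : ℂ) * Complex.I + (θ - Complex.arg a) * Complex.I
      = θ * Complex.I by ring]
    rw [← ha]
    ring
  rw [key, norm_neg, norm_mul, Complex.norm_exp_ofReal_mul_I, one_mul]

lemma Ff_int (a : ℂ) : IntervalIntegrable (Ff a) volume (-π) π := by
  have hπ := Real.pi_pos
  by_cases haa : ‖a‖ = 1
  · have hφ := Complex.arg_mem_Ioc a
    obtain ⟨hφ1, hφ2⟩ := hφ
    have h := (Gf_int (-π - Complex.arg a) (π - Complex.arg a)
      (by constructor <;> linarith) (by constructor <;> linarith)).comp_sub_right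
      (Complex.arg a)
    rw [show -π - Complex.arg a + Complex.arg a = -π by ring,
      show π - Complex.arg a + Complex.arg a = π by ring] at h
    have he : (fun x => Gf (x - Complex.arg a)) = Ff a :=
      funext fun x => (Ff_eq_G a haa x).symm
    rwa [he] at h
  · apply Continuous.intervalIntegrable
    apply Continuous.log
    · exact continuous_norm.comp
        ((Complex.continuous_exp.comp (Complex.continuous_ofReal.mul continuous_const)).sub
          continuous_const)
    · intro θ h
      have h2 : Complex.exp (θ * Complex.I) - a = 0 := by
        exact norm_eq_zero.mp h
      have h3 : Complex.exp (θ * Complex.I) = a := sub_eq_zero.mp h2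
      exact haa (h3 ▸ exp_unit θ)

lemma meanvalue' (b : ℂ) (hb : ‖b‖ < 1) :
    ∫ θ in (-π)..π, Real.log (‖1 - b * Complex.exp (θ * Complex.I)‖) = 0 := by
  have hper : Function.Periodic
      (fun θ : ℝ => Real.log (‖1 - b * Complex.exp (θ * Complex.I)‖)) (2*π) := by
    intro θ
    simp only
    congr 3
    push_cast
    rw [add_mul, Complex.exp_add]
    simp [Complex.exp_two_pi_mul_I]
  have h := hper.intervalIntegral_add_eq (-π) 0
  rw [show -π + 2*π = π by ring, zero_add] at h
  rw [h]
  exact meanvalue b hb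

lemma Ff_integral (a : ℂ) :
    ∫ θ in (-π)..π, Ff a θ = 2*π * max (Real.log (‖a‖)) 0 := by
  have hπ := Real.pi_pos
  rcases lt_trichotomy (‖a‖) 1 with ha | ha | ha
  · -- |a| < 1
    have hmax : max (Real.log (‖a‖)) 0 = 0 :=
      max_eq_right (Real.log_nonpos (norm_nonneg a) ha.le)
    rw [hmax, mul_zero]
    have hpt : ∀ θ : ℝ, Ff a θ =
        Real.log (‖1 - (starRingEnd ℂ) a * Complex.exp (θ * Complex.I)‖) := by
      intro θ
      unfold Ff
      congr 1
      have h1 : ‖Complex.exp (θ * Complex.I) - a‖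
          = ‖(starRingEnd ℂ) (Complex.exp (θ * Complex.I) - a)‖ :=
        (Complex.norm_conj _).symm
      rw [h1, map_sub]
      have h2 : (starRingEnd ℂ) (Complex.exp (θ * Complex.I))
          = Complex.exp (((-θ : ℝ)) * Complex.I) := by
        rw [← Complex.exp_conj]
        congr 1
        simp [Complex.conj_I]
      rw [h2]
      have h3 : Complex.exp ((-θ : ℝ) * Complex.I) - (starRingEnd ℂ) a
          = Complex.exp ((-θ : ℝ) * Complex.I) *
            (1 - (starRingEnd ℂ) a * Complex.exp (θ * Complex.I)) := by
        rw [mul_sub, mul_one]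
        have : Complex.exp ((-θ : ℝ) * Complex.I) * Complex.exp (θ * Complex.I) = 1 := by
          rw [← Complex.exp_add]
          push_cast
          rw [show -(θ:ℂ) * Complex.I + θ * Complex.I = 0 by ring, Complex.exp_zero]
        calc Complex.exp ((-θ : ℝ) * Complex.I) - (starRingEnd ℂ) a
            = Complex.exp ((-θ : ℝ) * Complex.I) - (starRingEnd ℂ) a *
              (Complex.exp ((-θ:ℝ) * Complex.I) * Complex.exp (θ * Complex.I)) := by
              rw [this, mul_one]
          _ = _ := by ring
      rw [h3, norm_mul, Complex.norm_exp_ofReal_mul_I, one_mul]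
    rw [intervalIntegral.integral_congr (fun θ _ => hpt θ)]
    exact meanvalue' _ (by rwa [Complex.norm_conj])
  · -- |a| = 1
    rw [ha, Real.log_one, max_self, mul_zero]
    rw [intervalIntegral.integral_congr (g := fun θ => Gf (θ - a.arg))
      (fun θ _ => Ff_eq_G a ha θ)]
    rw [intervalIntegral.integral_comp_sub_right Gf a.arg]
    have h := Gf_periodic.intervalIntegral_add_eq (-π - a.arg) 0
    rw [show -π - a.arg + 2*π = π - a.arg by ring, zero_add] at h
    rw [h]
    exact Gf_zero
  · -- 1 < |a|
    have ha0 : a ≠ 0 := by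
      intro h
      rw [h] at ha
      simp at ha
      linarith
    have hmax : max (Real.log (‖a‖)) 0 = Real.log (‖a‖) :=
      max_eq_left (Real.log_pos ha).le
    rw [hmax]
    have hinv : ‖a⁻¹‖ < 1 := by
      rw [norm_inv]
      exact inv_lt_one_of_one_lt₀ ha
    have hne : ∀ θ : ℝ, (1:ℂ) - a⁻¹ * Complex.exp (θ * Complex.I) ≠ 0 := by
      intro θ h
      have h1 : (1:ℂ) = a⁻¹ * Complex.exp (θ * Complex.I) := by linear_combination h
      have h2 := congrArg Norm.norm h1
      rw [norm_one, norm_mul, exp_unit, mul_one, norm_inv] at h2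
      have : (1:ℝ) < 1 := by
        calc (1:ℝ) = (‖a‖)⁻¹ := h2
          _ < 1 := by rw [← norm_inv]; exact hinv
      linarith
    have hpt : ∀ θ : ℝ, Ff a θ = Real.log (‖a‖)
        + Real.log (‖1 - a⁻¹ * Complex.exp (θ * Complex.I)‖) := by
      intro θ
      unfold Ff
      have hfac : Complex.exp (θ * Complex.I) - a
          = (-a) * (1 - a⁻¹ * Complex.exp (θ * Complex.I)) := by
        field_simp
        ring
      rw [hfac, norm_mul, norm_neg,
        Real.log_mul (norm_ne_zero_iff.mpr ha0) (norm_ne_zero_iff.mpr (hne θ))]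
    rw [intervalIntegral.integral_congr (fun θ _ => hpt θ)]
    have hcont : Continuous fun θ : ℝ =>
        Real.log (‖1 - a⁻¹ * Complex.exp (θ * Complex.I)‖) := by
      apply Continuous.log
      · exact continuous_norm.comp (continuous_const.sub (continuous_const.mul
          (Complex.continuous_exp.comp (Complex.continuous_ofReal.mul continuous_const))))
      · exact fun θ => norm_ne_zero_iff.mpr (hne θ)
    rw [intervalIntegral.integral_add intervalIntegrable_const (hcont.intervalIntegrable _ _)]
    rw [meanvalue' a⁻¹ hinv, intervalIntegral.integral_const, smul_eq_mul]
    ring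


set_option maxHeartbeats 1000000 in
theorem discrete_time_CSBI (m n : ℕ) (hmn : m ≤ n) (K : ℝ) (hK : K ≠ 0)
    (z : Fin m → ℂ) (hz : ∀ i, z i ≠ 0)
    (r : Fin n → ℂ) (hr : ∀ i, Norm.norm (r i) < 1) :
    (1 / (2 * π)) * ∫ ω in (-π)..π,
        Real.logb 2 (Norm.norm ((K : ℂ) * (∏ i, (Complex.exp ((ω : ℂ) * Complex.I) - z i)) /
          (∏ i, (Complex.exp ((ω : ℂ) * Complex.I) - r i)))) =
      (∑ i ∈ Finset.univ.filter (fun i => 1 < Norm.norm (z i)),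
        Real.logb 2 (Norm.norm (z i))) + Real.logb 2 |K| := by
  have hπ := Real.pi_pos
  have hlog2 : Real.log 2 ≠ 0 := (Real.log_pos one_lt_two).ne'
  have hKabs : |K| ≠ 0 := abs_ne_zero.mpr hK
  -- Step 1 : a.e. rewrite of the integrand
  have hS : volume ((⋃ i, {θ : ℝ | Complex.exp (θ * Complex.I) = z i}) ∪
      ⋃ i, {θ : ℝ | Complex.exp (θ * Complex.I) = r i}) = 0 :=
    Set.Countable.measure_zero
      ((Set.countable_iUnion fun i => countable_expEq (z i)).union
        (Set.countable_iUnion fun i => countable_expEq (r i))) _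
  have hcongr : (∫ ω in (-π)..π,
        Real.logb 2 (‖(K : ℂ) * (∏ i, (Complex.exp ((ω : ℂ) * Complex.I) - z i)) /
          (∏ i, (Complex.exp ((ω : ℂ) * Complex.I) - r i))‖))
      = ∫ ω in (-π)..π, (Real.log 2)⁻¹ *
          (Real.log |K| + (∑ i, Ff (z i) ω) - ∑ i, Ff (r i) ω) := by
    apply intervalIntegral.integral_congr_ae
    filter_upwards [measure_eq_zero_iff_ae_notMem.mp hS] with θ hθ _
    simp only [Set.mem_union, Set.mem_iUnion, Set.mem_setOf_eq, not_or, not_exists] at hθ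
    obtain ⟨hθz, hθr⟩ := hθ
    have hzne : ∀ i, Complex.exp ((θ : ℂ) * Complex.I) - z i ≠ 0 := fun i h =>
      hθz i (sub_eq_zero.mp h)
    have hrne : ∀ i, Complex.exp ((θ : ℂ) * Complex.I) - r i ≠ 0 := fun i h =>
      hθr i (sub_eq_zero.mp h)
    rw [norm_div, norm_mul, Complex.norm_real, Real.norm_eq_abs, norm_prod, norm_prod]
    have hPz : ∀ i ∈ Finset.univ, ‖Complex.exp ((θ:ℂ) * Complex.I) - z i‖ ≠ 0 :=
      fun i _ => norm_ne_zero_iff.mpr (hzne i)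
    have hPr : ∀ i ∈ Finset.univ, ‖Complex.exp ((θ:ℂ) * Complex.I) - r i‖ ≠ 0 :=
      fun i _ => norm_ne_zero_iff.mpr (hrne i)
    have hprodz : (∏ i, ‖Complex.exp ((θ:ℂ) * Complex.I) - z i‖) ≠ 0 :=
      Finset.prod_ne_zero_iff.mpr hPz
    have hprodr : (∏ i, ‖Complex.exp ((θ:ℂ) * Complex.I) - r i‖) ≠ 0 :=
      Finset.prod_ne_zero_iff.mpr hPr
    rw [Real.logb, Real.log_div (mul_ne_zero hKabs hprodz) hprodr,
      Real.log_mul hKabs hprodz, Real.log_prod hPz, Real.log_prod hPr]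
    rw [div_eq_inv_mul]
    simp only [Ff]
  rw [hcongr]
  -- Step 2 : compute the integral
  have hzint : ∀ i, IntervalIntegrable (Ff (z i)) volume (-π) π := fun i => Ff_int (z i)
  have hrint : ∀ i, IntervalIntegrable (Ff (r i)) volume (-π) π := fun i => Ff_int (r i)
  have hsumz : IntervalIntegrable (fun θ => ∑ i, Ff (z i) θ) volume (-π) π := by
    have he : (fun θ => ∑ i, Ff (z i) θ) = ∑ i, Ff (z i) := by
      funext θ; rw [Finset.sum_apply]
    rw [he]
    exact IntervalIntegrable.sum _ (fun i _ => hzint i)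
  have hsumr : IntervalIntegrable (fun θ => ∑ i, Ff (r i) θ) volume (-π) π := by
    have he : (fun θ => ∑ i, Ff (r i) θ) = ∑ i, Ff (r i) := by
      funext θ; rw [Finset.sum_apply]
    rw [he]
    exact IntervalIntegrable.sum _ (fun i _ => hrint i)
  rw [intervalIntegral.integral_const_mul]
  rw [intervalIntegral.integral_sub (intervalIntegrable_const.add hsumz) hsumr,
    intervalIntegral.integral_add intervalIntegrable_const hsumz,
    intervalIntegral.integral_const, smul_eq_mul,
    intervalIntegral.integral_finset_sum (fun i _ => hzint i),
    intervalIntegral.integral_finset_sum (fun i _ => hrint i)]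
  have hrz : ∀ i, (∫ θ in (-π)..π, Ff (r i) θ) = 0 := by
    intro i
    rw [Ff_integral, max_eq_right (Real.log_nonpos (norm_nonneg _) (hr i).le), mul_zero]
  rw [Finset.sum_congr rfl (fun i _ => hrz i), Finset.sum_const, smul_zero, sub_zero]
  have hzval : ∀ i, (∫ θ in (-π)..π, Ff (z i) θ)
      = 2*π * max (Real.log (‖z i‖)) 0 := fun i => Ff_integral (z i)
  rw [Finset.sum_congr rfl (fun i _ => hzval i)]
  -- Step 3 : rewrite the sum over the filter
  have hfilter : (∑ i, 2*π * max (Real.log (‖z i‖)) 0)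
      = 2*π * ∑ i ∈ Finset.univ.filter (fun i => 1 < ‖z i‖),
          Real.log (‖z i‖) := by
    rw [← Finset.mul_sum]
    congr 1
    rw [← Finset.sum_filter_of_ne (p := fun i => 1 < ‖z i‖)]
    · apply Finset.sum_congr rfl
      intro i hi
      rw [Finset.mem_filter] at hi
      exact max_eq_left (Real.log_pos hi.2).le
    · intro i _ hne
      by_contra hle
      push_neg at hle
      exact hne (max_eq_right (Real.log_nonpos (norm_nonneg _) hle))
  rw [hfilter]
  -- Step 4 : final algebra
  simp only [Real.logb]
  rw [← Finset.sum_div]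
  field_simp
  ring
end

section
/- Let L(z) = K·∏ᵢ₌₁ⁿ(z − zᵢ)/∏ᵢ₌₁ⁿ(z − pᵢ) with K real, K ≠ −1, and suppose ∏ᵢ(z − pᵢ) + K·∏ᵢ(z − zᵢ) = (1+K)·∏ᵢ₌₁ⁿ(z − rᵢ) with all |rᵢ| < 1. Then (1/2π)·∫_{−π}^{π} log₂|L(e^{jω})/(1 + L(e^{jω}))| dω = Σ_{i : |zᵢ| > 1} log₂|zᵢ| + log₂|K/(1+K)|. -/
open MeasureTheory Real Complex

open intervalIntegral

lemma aux_log_int01 : IntervalIntegrable Real.log volume 0 1 := by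
  have h : IntervalIntegrable (fun x : ℝ => 2 * x ^ (-(1:ℝ)/2)) volume 0 1 :=
    (intervalIntegrable_rpow' (by norm_num)).const_mul 2
  refine h.mono_fun Real.measurable_log.aestronglyMeasurable ?_
  filter_upwards [ae_restrict_mem measurableSet_uIoc] with x hx
  rw [Set.uIoc_of_le (by norm_num : (0:ℝ) ≤ 1)] at hx
  obtain ⟨hx0, hx1⟩ := hx
  have h1 : |Real.log x| = -Real.log x := abs_of_nonpos (Real.log_nonpos hx0.le hx1)
  have h2 : -Real.log x ≤ 2 * x ^ (-(1:ℝ)/2) := by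
    have : Real.log (x ^ (-(1:ℝ)/2)) = (-(1:ℝ)/2) * Real.log x := Real.log_rpow hx0 _
    have h3 : Real.log (x ^ (-(1:ℝ)/2)) ≤ x ^ (-(1:ℝ)/2) - 1 :=
      Real.log_le_sub_one_of_pos (Real.rpow_pos_of_pos hx0 _)
    nlinarith [Real.rpow_pos_of_pos hx0 (-(1:ℝ)/2)]
  have h4 : (0:ℝ) ≤ 2 * x ^ (-(1:ℝ)/2) := by positivity
  simp only [Real.norm_eq_abs]
  rw [h1, _root_.abs_of_nonneg h4]
  exact h2

lemma aux_log_int (c : ℝ) (hc : 0 < c) : IntervalIntegrable Real.log volume 0 c := by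
  rcases le_total c 1 with h | h
  · exact aux_log_int01.mono_set (by rw [Set.uIcc_of_le hc.le, Set.uIcc_of_le zero_le_one]; exact Set.Icc_subset_Icc le_rfl h)
  · exact aux_log_int01.trans (intervalIntegrable_log (by rw [Set.uIcc_of_le h]; simp))

lemma aux_logsin_int_half : IntervalIntegrable (fun x => Real.log (Real.sin x)) volume 0 (π/2) := by
  have hpi : (0:ℝ) < π/2 := by positivity
  have h : IntervalIntegrable (fun x : ℝ => |Real.log x| + Real.log (π/2)) volume 0 (π/2) :=
    ((aux_log_int _ hpi).abs).add intervalIntegrable_const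
  refine h.mono_fun ((Real.measurable_log.comp Real.measurable_sin).aestronglyMeasurable) ?_
  filter_upwards [ae_restrict_mem measurableSet_uIoc] with x hx
  rw [Set.uIoc_of_le hpi.le] at hx
  obtain ⟨hx0, hx1⟩ := hx
  have hs0 : 0 < Real.sin x := Real.sin_pos_of_pos_of_lt_pi hx0 (by linarith [Real.pi_pos])
  have hup : Real.log (Real.sin x) ≤ Real.log x := Real.log_le_log hs0 (Real.sin_le hx0.le) |>.trans_eq rfl
  have hlow : Real.log x - Real.log (π/2) ≤ Real.log (Real.sin x) := by
    have h2 : 2/π * x ≤ Real.sin x := Real.mul_le_sin hx0.le hx1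
    have h3 : Real.log (2/π * x) ≤ Real.log (Real.sin x) := Real.log_le_log (by positivity) h2
    rw [Real.log_mul (by positivity) hx0.ne'] at h3
    have h5 : Real.log (2/π) = - Real.log (π/2) := by
      rw [← Real.log_inv]; norm_num
    linarith
  have hpilog : 0 ≤ Real.log (π/2) := Real.log_nonneg (by linarith [Real.pi_gt_three])
  simp only [Real.norm_eq_abs]
  rw [_root_.abs_of_nonneg (by positivity : (0:ℝ) ≤ |Real.log x| + Real.log (π/2))]
  rcases abs_cases (Real.log x) with ⟨he, _⟩ | ⟨he, _⟩ <;> rcases abs_cases (Real.log (Real.sin x)) with ⟨hf, _⟩ | ⟨hf, _⟩ <;> linarith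

lemma aux_periodic_int {f : ℝ → ℝ} {T : ℝ} (hT : 0 < T) (hp : Function.Periodic f T)
    (h : IntervalIntegrable f volume 0 T) (a b : ℝ) : IntervalIntegrable f volume a b := by
  -- integrable on m*T .. m*T + k*T for all m : ℤ, k : ℕ
  have hshift : ∀ m : ℤ, IntervalIntegrable f volume (m * T) (m * T + T) := by
    intro m
    have := h.comp_sub_right (m * T)
    have heq : (fun x => f (x - m * T)) = f := by
      funext x
      simpa using hp.sub_int_mul_eq (x := x) m
    rw [heq] at this
    simpa [zero_add, add_comm] using this
  have hk : ∀ (m : ℤ) (k : ℕ), IntervalIntegrable f volume (m * T) (m * T + k * T) := by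
    intro m k
    induction k with
    | zero => simp
    | succ k ih =>
      have h2 : IntervalIntegrable f volume (m * T + (k:ℝ) * T) (m * T + (k:ℝ) * T + T) := by
        have := hshift (m + k)
        have e1 : ((m + (k:ℤ) : ℤ) : ℝ) * T = m * T + k * T := by push_cast; ring
        rw [e1] at this
        exact this
      have e3 : (m:ℝ) * T + ((k:ℕ)+1 : ℕ) * T = m * T + (k:ℝ) * T + T := by push_cast; ring
      rw [e3]
      exact ih.trans h2
  -- now cover [[a,b]]
  set c := min a b
  set d := max a b
  obtain ⟨m, hm⟩ : ∃ m : ℤ, m * T ≤ c := ⟨⌊c / T⌋, by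
    have := Int.floor_le (c / T)
    calc (⌊c / T⌋ : ℝ) * T ≤ (c / T) * T := by nlinarith
    _ = c := by field_simp⟩
  obtain ⟨k, hkk⟩ : ∃ k : ℕ, d ≤ m * T + k * T := by
    obtain ⟨k, hk2⟩ := exists_nat_gt ((d - m * T) / T)
    refine ⟨k, ?_⟩
    have : (d - m * T) / T * T ≤ (k:ℝ) * T := by nlinarith
    rw [div_mul_cancel₀ _ hT.ne'] at this
    linarith
  refine (hk m k).mono_set ?_
  have hmk : (m:ℝ) * T ≤ m*T + k*T := by nlinarith [Nat.cast_nonneg (α := ℝ) k]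
  rw [Set.uIcc_of_le hmk]
  refine Set.uIcc_subset_Icc ?_ ?_
  · exact ⟨le_trans hm (min_le_left a b), le_trans (le_max_left a b) hkk⟩
  · exact ⟨le_trans hm (min_le_right a b), le_trans (le_max_right a b) hkk⟩

lemma aux_logsin_pi : IntervalIntegrable (fun x => Real.log (Real.sin x)) volume 0 π := by
  have h2 : IntervalIntegrable (fun x => Real.log (Real.sin x)) volume (π/2) π := by
    have := aux_logsin_int_half.comp_sub_left π
    have heq : (fun x => Real.log (Real.sin (π - x))) = fun x => Real.log (Real.sin x) := by
      funext x; rw [Real.sin_pi_sub]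
    rw [heq] at this
    have h4 : IntervalIntegrable (fun x => Real.log (Real.sin x)) volume (π - 0) (π - π/2) := this
    have e : π - π/2 = π/2 := by ring
    rw [e] at h4
    simpa using h4.symm
  exact aux_logsin_int_half.trans h2

lemma aux_logabssin_pi : IntervalIntegrable (fun x => Real.log |Real.sin x|) volume 0 π := by
  refine aux_logsin_pi.congr_ae ?_
  filter_upwards [ae_restrict_mem measurableSet_uIoc] with x hx
  rw [Set.uIoc_of_le Real.pi_pos.le] at hx
  rw [_root_.abs_of_nonneg (Real.sin_nonneg_of_nonneg_of_le_pi hx.1.le hx.2)]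

lemma aux_logabssin_int (a b : ℝ) : IntervalIntegrable (fun x => Real.log |Real.sin x|) volume a b := by
  refine aux_periodic_int Real.pi_pos ?_ aux_logabssin_pi a b
  intro x
  simp [Real.sin_add_pi, abs_neg]

lemma aux_logcos_int_half : IntervalIntegrable (fun x => Real.log (Real.cos x)) volume 0 (π/2) := by
  have h := aux_logsin_int_half.comp_sub_left (π/2)
  have heq : (fun x => Real.log (Real.sin (π/2 - x))) = fun x => Real.log (Real.cos x) := by
    funext x; rw [Real.sin_pi_div_two_sub]
  rw [heq] at h
  have e1 : π/2 - 0 = π/2 := by ring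
  have e2 : π/2 - π/2 = 0 := by ring
  rw [e1, e2] at h
  exact h.symm

lemma aux_integral_log_sin_pi : ∫ x in (0:ℝ)..π, Real.log (Real.sin x) = -π * Real.log 2 := by
  set J := ∫ x in (0:ℝ)..(π/2), Real.log (Real.sin x) with hJ
  have h_cos : ∫ x in (0:ℝ)..(π/2), Real.log (Real.cos x) = J := by
    have h := integral_comp_sub_left (fun x => Real.log (Real.sin x)) (π/2) (a := 0) (b := π/2)
    simp only [Real.sin_pi_div_two_sub] at h
    rw [show π/2 - π/2 = 0 by ring, show π/2 - 0 = π/2 by ring] at h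
    exact h
  have h_half2 : ∫ x in (π/2)..π, Real.log (Real.sin x) = J := by
    have h := integral_comp_sub_left (fun x => Real.log (Real.sin x)) π (a := 0) (b := π/2)
    simp only [Real.sin_pi_sub] at h
    rw [show π - π/2 = π/2 by ring, show π - 0 = π by ring] at h
    exact h.symm
  have h_sin_int2 : IntervalIntegrable (fun x => Real.log (Real.sin x)) volume (π/2) π := by
    refine aux_logsin_pi.mono_set ?_
    rw [Set.uIcc_of_le (by linarith [Real.pi_pos] : π/2 ≤ π), Set.uIcc_of_le Real.pi_pos.le]
    exact Set.Icc_subset_Icc (by positivity) le_rfl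
  have h_full : ∫ x in (0:ℝ)..π, Real.log (Real.sin x) = 2 * J := by
    rw [← integral_add_adjacent_intervals aux_logsin_int_half h_sin_int2, h_half2]
    ring
  have h_double_int : IntervalIntegrable (fun x => Real.log (Real.sin (2*x))) volume 0 (π/2) := by
    have h := aux_logsin_pi.comp_mul_left (c := 2)
    norm_num at h
    exact h
  have h_double : ∫ x in (0:ℝ)..(π/2), Real.log (Real.sin (2*x)) = J := by
    have h := integral_comp_mul_left (a := 0) (b := π/2) (fun x => Real.log (Real.sin x)) (c := 2) two_ne_zero
    rw [show (2:ℝ) * (π/2) = π by ring, show (2:ℝ) * 0 = 0 by ring] at h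
    rw [h, h_full]
    simp
  have h_key : J + J = J - (π/2) * Real.log 2 := by
    have hsum : ∫ x in (0:ℝ)..(π/2), (Real.log (Real.sin x) + Real.log (Real.cos x)) = J + J := by
      rw [integral_add aux_logsin_int_half aux_logcos_int_half, h_cos]
    have hae : ∀ᵐ x : ℝ, x ∈ Set.uIoc (0:ℝ) (π/2) →
        Real.log (Real.sin x) + Real.log (Real.cos x) = Real.log (Real.sin (2*x)) - Real.log 2 := by
      have h2 : ∀ᵐ x : ℝ, x ≠ π/2 := by
        simpa using (MeasureTheory.measure_eq_zero_iff_ae_notMem (μ := (volume : Measure ℝ)) (s := {π/2})).mp Real.volume_singleton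
      filter_upwards [h2] with x hx hmem
      rw [Set.uIoc_of_le (by positivity : (0:ℝ) ≤ π/2)] at hmem
      have hs : 0 < Real.sin x := Real.sin_pos_of_pos_of_lt_pi hmem.1 (by linarith [Real.pi_pos, hmem.2])
      have hc : 0 < Real.cos x := Real.cos_pos_of_mem_Ioo ⟨by linarith [Real.pi_pos, hmem.1], lt_of_le_of_ne hmem.2 hx⟩
      rw [Real.sin_two_mul, Real.log_mul (mul_ne_zero two_ne_zero hs.ne') hc.ne',
        Real.log_mul two_ne_zero hs.ne']
      ring
    have := intervalIntegral.integral_congr_ae hae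
    rw [hsum] at this
    rw [this, intervalIntegral.integral_sub h_double_int intervalIntegrable_const, h_double]
    simp
  have hJ_val : J = -(π/2) * Real.log 2 := by linarith
  rw [h_full, hJ_val]; ring

lemma aux_cauchy (a : ℂ) (ha : ‖a‖ < 1) :
    ∫ θ in (0:ℝ)..(2*π), Real.log (‖1 - a * Complex.exp (θ * Complex.I)‖) = 0 := by
  set f : ℂ → ℂ := fun z => Complex.log (1 - a * z) with hf
  have hne : ∀ z : ℂ, ‖z‖ ≤ 1 → 0 < (1 - a * z).re := by
    intro z hz
    have h1 : ‖a * z‖ < 1 := by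
      rw [norm_mul]
      calc ‖a‖ * ‖z‖ ≤ ‖a‖ * 1 := by
            exact mul_le_mul_of_nonneg_left hz (norm_nonneg a)
      _ < 1 := by simpa using ha
    have h2 : (a * z).re ≤ ‖a * z‖ := Complex.re_le_norm _
    simp only [Complex.sub_re, Complex.one_re, Complex.mul_re]
    have : (a*z).re < 1 := lt_of_le_of_lt h2 h1
    simp only [Complex.mul_re] at this
    linarith
  have hdiff : DifferentiableOn ℂ f (Metric.closedBall 0 1) := by
    intro z hz
    rw [Metric.mem_closedBall, dist_zero_right] at hz
    refine DifferentiableAt.differentiableWithinAt ?_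
    refine DifferentiableAt.clog ?_ ?_
    · exact ((differentiable_const (1:ℂ)).sub (differentiable_id.const_mul a)).differentiableAt
    · exact Complex.mem_slitPlane_iff.2 (Or.inl (hne z hz))
  have hcauchy := hdiff.circleIntegral_sub_inv_smul (w := 0) (by simp)
  have hf0 : f 0 = 0 := by simp [hf]
  rw [hf0, smul_zero] at hcauchy
  -- unfold circle integral
  rw [circleIntegral] at hcauchy
  simp only [deriv_circleMap, circleMap, Complex.ofReal_one, one_mul, Complex.ofReal_zero,
    zero_add, sub_zero, smul_eq_mul] at hcauchy
  have hcauchy2 : ∫ θ in (0:ℝ)..(2*π), Complex.I * f (Complex.exp (θ * Complex.I)) = 0 := by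
    rw [← hcauchy]
    refine intervalIntegral.integral_congr fun θ _ => ?_
    have hexp : Complex.exp (θ * Complex.I) ≠ 0 := Complex.exp_ne_zero _
    field_simp
  rw [intervalIntegral.integral_const_mul] at hcauchy2
  have hcauchy3 : ∫ θ in (0:ℝ)..(2*π), f (Complex.exp (θ * Complex.I)) = 0 := by
    rcases mul_eq_zero.mp hcauchy2 with h | h
    · exact absurd h Complex.I_ne_zero
    · exact h
  have hcont : Continuous fun θ : ℝ => f (Complex.exp (θ * Complex.I)) := by
    have hexp : Continuous fun θ : ℝ => Complex.exp (θ * Complex.I) :=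
      Complex.continuous_exp.comp (by continuity)
    refine Continuous.clog ?_ ?_
    · exact continuous_const.sub (continuous_const.mul hexp)
    · intro θ
      refine Complex.mem_slitPlane_iff.2 (Or.inl (hne _ ?_))
      simp [Complex.norm_exp]
  have hint : IntervalIntegrable (fun θ : ℝ => f (Complex.exp (θ * Complex.I))) volume 0 (2*π) :=
    hcont.intervalIntegrable _ _
  have := Complex.reCLM.intervalIntegral_comp_comm hint
  rw [hcauchy3] at this
  simp only [Complex.reCLM_apply, map_zero] at this
  have hgoal : ∫ θ in (0:ℝ)..(2*π), Real.log (‖1 - a * Complex.exp (θ * Complex.I)‖)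
      = ∫ θ in (0:ℝ)..(2*π), (f (Complex.exp (θ * Complex.I))).re := by
    refine intervalIntegral.integral_congr fun θ _ => ?_
    simp only [hf]
    rw [Complex.log_re]
  rw [hgoal, this]

lemma aux_abs_exp_sub (x y : ℝ) :
    ‖Complex.exp (x * Complex.I) - Complex.exp (y * Complex.I)‖
      = 2 * |Real.sin ((x - y)/2)| := by
  have hsq : ‖Complex.exp (x * Complex.I) - Complex.exp (y * Complex.I)‖ ^ 2
      = (2 * |Real.sin ((x - y)/2)|) ^ 2 := by
    rw [Complex.sq_norm, Complex.normSq_apply]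
    simp only [Complex.sub_re, Complex.sub_im, Complex.exp_ofReal_mul_I_re,
      Complex.exp_ofReal_mul_I_im]
    have hcos : Real.cos (x - y) = 1 - 2 * Real.sin ((x-y)/2) ^ 2 := by
      have h := Real.cos_two_mul' ((x-y)/2)
      rw [show 2*((x-y)/2) = x - y by ring] at h
      have := Real.sin_sq_add_cos_sq ((x-y)/2)
      linarith
    have hcs : Real.cos (x - y) = Real.cos x * Real.cos y + Real.sin x * Real.sin y :=
      Real.cos_sub x y
    have p1 := Real.sin_sq_add_cos_sq x
    have p2 := Real.sin_sq_add_cos_sq y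
    have habs : |Real.sin ((x-y)/2)| ^ 2 = Real.sin ((x-y)/2) ^ 2 := sq_abs _
    nlinarith
  exact (pow_left_inj₀ (norm_nonneg _) (by positivity) two_ne_zero).mp hsq

lemma aux_logabssin_half_int (a b : ℝ) :
    IntervalIntegrable (fun x => Real.log |Real.sin (x/2)|) volume a b := by
  have h := (aux_logabssin_int (a/2) (b/2)).comp_mul_right (c := 2⁻¹)
  have heq : (fun x => Real.log |Real.sin (x * 2⁻¹)|) = fun x => Real.log |Real.sin (x/2)| := by
    funext x; rw [← div_eq_mul_inv]
  rw [heq] at h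
  simpa using h

lemma aux_sin_zero_countable (φ : ℝ) : Set.Countable {ω : ℝ | Real.sin ((ω - φ)/2) = 0} := by
  have hsub : {ω : ℝ | Real.sin ((ω - φ)/2) = 0} ⊆ Set.range (fun n : ℤ => 2*n*π + φ) := by
    intro ω hω
    obtain ⟨n, hn⟩ := Real.sin_eq_zero_iff.mp hω
    exact ⟨n, by simp only []; linarith⟩
  exact (Set.countable_range _).mono hsub

lemma aux_g_eq_ae (φ : ℝ) : ∀ᵐ ω : ℝ,
    Real.log (2 * |Real.sin ((ω - φ)/2)|) = Real.log 2 + Real.log |Real.sin ((ω - φ)/2)| := by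
  have h0 : ∀ᵐ ω : ℝ, ω ∉ {ω : ℝ | Real.sin ((ω - φ)/2) = 0} :=
    MeasureTheory.measure_eq_zero_iff_ae_notMem.mp ((aux_sin_zero_countable φ).measure_zero _)
  filter_upwards [h0] with ω hω
  rw [Real.log_mul two_ne_zero (by simpa using fun h => hω h)]

lemma aux_shifted_int (φ : ℝ) (a b : ℝ) :
    IntervalIntegrable (fun ω => Real.log (2 * |Real.sin ((ω - φ)/2)|)) volume a b := by
  have hint : IntervalIntegrable (fun ω => Real.log 2 + Real.log |Real.sin ((ω - φ)/2)|) volume a b := by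
    refine intervalIntegrable_const.add ?_
    have h := (aux_logabssin_half_int (a - φ) (b - φ)).comp_sub_right φ
    simpa using h
  refine hint.congr_ae ?_
  exact ((aux_g_eq_ae φ).mono fun ω h => h.symm).filter_mono (MeasureTheory.ae_mono MeasureTheory.Measure.restrict_le_self)

lemma aux_jensen_eq_one (a : ℂ) (ha : ‖a‖ = 1) :
    ∫ ω in (0:ℝ)..(2*π), Real.log (‖Complex.exp (ω * Complex.I) - a‖) = 0 := by
  set φ := a.arg with hφ
  have ha2 : a = Complex.exp (φ * Complex.I) := by
    have := Complex.norm_mul_exp_arg_mul_I a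
    rw [ha] at this
    simpa using this.symm
  -- rewrite integrand
  have h1 : ∫ ω in (0:ℝ)..(2*π), Real.log (‖Complex.exp (ω * Complex.I) - a‖)
      = ∫ ω in (0:ℝ)..(2*π), Real.log (2 * |Real.sin ((ω - φ)/2)|) := by
    refine intervalIntegral.integral_congr fun ω _ => ?_
    rw [ha2, aux_abs_exp_sub]
  -- periodic shift
  have hper : Function.Periodic (fun t : ℝ => Real.log (2 * |Real.sin (t/2)|)) (2*π) := by
    intro t
    have : Real.sin ((t + 2*π)/2) = - Real.sin (t/2) := by
      rw [show (t + 2*π)/2 = t/2 + π by ring, Real.sin_add_pi]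
    simp [this]
  have h2 : ∫ ω in (0:ℝ)..(2*π), Real.log (2 * |Real.sin ((ω - φ)/2)|)
      = ∫ ω in (0:ℝ)..(2*π), Real.log (2 * |Real.sin (ω/2)|) := by
    have hc := intervalIntegral.integral_comp_sub_right
      (fun t => Real.log (2 * |Real.sin (t/2)|)) φ (a := 0) (b := 2*π)
    rw [hc]
    have := hper.intervalIntegral_add_eq (0 - φ) 0
    rw [show (0:ℝ) - φ + 2*π = 2*π - φ by ring, show (0:ℝ) + 2*π = 2*π by ring] at this
    exact this
  -- split log
  have h3 : ∫ ω in (0:ℝ)..(2*π), Real.log (2 * |Real.sin (ω/2)|)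
      = ∫ ω in (0:ℝ)..(2*π), (Real.log 2 + Real.log |Real.sin (ω/2)|) := by
    refine intervalIntegral.integral_congr_ae ?_
    filter_upwards [aux_g_eq_ae 0] with ω hω _
    simpa using hω
  have h4 : ∫ ω in (0:ℝ)..(2*π), (Real.log 2 + Real.log |Real.sin (ω/2)|)
      = 2*π*Real.log 2 + ∫ ω in (0:ℝ)..(2*π), Real.log |Real.sin (ω/2)| := by
    rw [intervalIntegral.integral_add intervalIntegrable_const (aux_logabssin_half_int _ _)]
    simp [mul_comm]
  have h5 : ∫ ω in (0:ℝ)..(2*π), Real.log |Real.sin (ω/2)| = -2*π*Real.log 2 := by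
    have hc := intervalIntegral.integral_comp_div (a := 0) (b := 2*π) (c := 2)
      (fun u => Real.log |Real.sin u|) two_ne_zero
    rw [hc, show (0:ℝ)/2 = 0 by ring, show (2*π)/2 = π by ring]
    have habs : ∫ u in (0:ℝ)..π, Real.log |Real.sin u| = ∫ u in (0:ℝ)..π, Real.log (Real.sin u) := by
      refine intervalIntegral.integral_congr fun u hu => ?_
      rw [Set.uIcc_of_le Real.pi_pos.le] at hu
      rw [_root_.abs_of_nonneg (Real.sin_nonneg_of_nonneg_of_le_pi hu.1 hu.2)]
    rw [habs, aux_integral_log_sin_pi]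
    simp
    ring
  rw [h1, h2, h3, h4, h5]
  ring

lemma aux_abs_conj_trick (a : ℂ) (ω : ℝ) :
    ‖Complex.exp (ω * Complex.I) - a‖
      = ‖1 - (starRingEnd ℂ a) * Complex.exp (ω * Complex.I)‖ := by
  have key : 1 - (starRingEnd ℂ a) * Complex.exp (ω * Complex.I)
      = Complex.exp (ω * Complex.I) * (starRingEnd ℂ) (Complex.exp (ω * Complex.I) - a) := by
    rw [map_sub, mul_sub]
    have hconj : (starRingEnd ℂ) (Complex.exp (ω * Complex.I)) = Complex.exp (-(ω * Complex.I)) := by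
      rw [← Complex.exp_conj]
      congr 1
      simp [Complex.conj_I]
    rw [hconj, ← Complex.exp_add]
    simp
    ring
  rw [key, norm_mul, Complex.norm_conj, Complex.norm_exp]
  simp

lemma aux_jensen_lt_one (a : ℂ) (ha : ‖a‖ < 1) :
    ∫ ω in (0:ℝ)..(2*π), Real.log (‖Complex.exp (ω * Complex.I) - a‖) = 0 := by
  have h1 : ∫ ω in (0:ℝ)..(2*π), Real.log (‖Complex.exp (ω * Complex.I) - a‖)
      = ∫ ω in (0:ℝ)..(2*π), Real.log (‖1 - (starRingEnd ℂ a) * Complex.exp (ω * Complex.I)‖) := by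
    exact intervalIntegral.integral_congr fun ω _ => by rw [aux_abs_conj_trick]
  rw [h1]
  exact aux_cauchy _ (by rwa [Complex.norm_conj])

lemma aux_one_sub_ne (a : ℂ) (ha : ‖a‖ < 1) (w : ℂ) (hw : ‖w‖ = 1) :
    1 - a * w ≠ 0 := by
  intro h
  have : ‖a * w‖ = 1 := by
    have : a * w = 1 := by linear_combination -h
    rw [this]; simp
  rw [norm_mul, hw, mul_one] at this
  exact absurd this ha.ne

lemma aux_jensen_gt_one (a : ℂ) (ha : 1 < ‖a‖) :
    ∫ ω in (0:ℝ)..(2*π), Real.log (‖Complex.exp (ω * Complex.I) - a‖)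
      = 2*π*Real.log (‖a‖) := by
  have ha0 : a ≠ 0 := by
    intro h; rw [h] at ha; simp at ha; linarith
  have hainv : ‖a⁻¹‖ < 1 := by
    rw [norm_inv]
    rw [inv_lt_one_iff₀]
    right; exact ha
  have h1 : ∫ ω in (0:ℝ)..(2*π), Real.log (‖Complex.exp (ω * Complex.I) - a‖)
      = ∫ ω in (0:ℝ)..(2*π), (Real.log (‖a‖)
          + Real.log (‖1 - a⁻¹ * Complex.exp (ω * Complex.I)‖)) := by
    refine intervalIntegral.integral_congr fun ω _ => ?_
    have hfact : Complex.exp (ω * Complex.I) - a = (-a) * (1 - a⁻¹ * Complex.exp (ω * Complex.I)) := by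
      field_simp
      ring
    have hne : ‖1 - a⁻¹ * Complex.exp (ω * Complex.I)‖ ≠ 0 :=
      norm_ne_zero_iff.mpr (aux_one_sub_ne a⁻¹ hainv _ (by simp [Complex.norm_exp]))
    rw [hfact, norm_mul, norm_neg, Real.log_mul (norm_ne_zero_iff.mpr ha0) hne]
  have hcont : IntervalIntegrable
      (fun ω : ℝ => Real.log (‖1 - a⁻¹ * Complex.exp (ω * Complex.I)‖)) volume 0 (2*π) := by
    refine Continuous.intervalIntegrable ?_ _ _
    refine Continuous.log ?_ ?_
    · exact continuous_norm.comp (continuous_const.sub (continuous_const.mul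
        (Complex.continuous_exp.comp (by continuity))))
    · exact fun ω => norm_ne_zero_iff.mpr (aux_one_sub_ne a⁻¹ hainv _ (by simp [Complex.norm_exp]))
  rw [h1, intervalIntegral.integral_add intervalIntegrable_const hcont, aux_cauchy _ hainv]
  simp [mul_comm]

lemma aux_exp_periodic : Function.Periodic (fun ω : ℝ => Complex.exp (ω * Complex.I)) (2*π) := by
  intro ω
  simp only
  push_cast
  rw [add_mul, Complex.exp_add, Complex.exp_two_pi_mul_I, mul_one]

lemma aux_jensen (a : ℂ) :
    ∫ ω in (-π)..π, Real.log (‖Complex.exp (ω * Complex.I) - a‖)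
      = 2*π*Real.log (max 1 (‖a‖)) := by
  have hper : Function.Periodic (fun ω : ℝ => Real.log (‖Complex.exp (ω * Complex.I) - a‖)) (2*π) := by
    intro ω
    simp only
    have h := aux_exp_periodic ω
    dsimp only at h
    rw [h]
  have hshift : ∫ ω in (-π)..π, Real.log (‖Complex.exp (ω * Complex.I) - a‖)
      = ∫ ω in (0:ℝ)..(2*π), Real.log (‖Complex.exp (ω * Complex.I) - a‖) := by
    have := hper.intervalIntegral_add_eq (-π) 0
    rw [show -π + 2*π = π by ring, show (0:ℝ) + 2*π = 2*π by ring] at this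
    exact this
  rw [hshift]
  rcases lt_trichotomy (‖a‖) 1 with h | h | h
  · rw [aux_jensen_lt_one a h, max_eq_left h.le]
    simp
  · rw [h, aux_jensen_eq_one a h, max_self]
    simp
  · rw [aux_jensen_gt_one a h, max_eq_right h.le]

lemma aux_jensen_int (a : ℂ) (t₁ t₂ : ℝ) :
    IntervalIntegrable (fun ω => Real.log (‖Complex.exp (ω * Complex.I) - a‖)) volume t₁ t₂ := by
  rcases eq_or_ne (‖a‖) 1 with h | h
  · -- |a| = 1 : reduce to shifted log-sin
    set φ := a.arg with hφ
    have ha2 : a = Complex.exp (φ * Complex.I) := by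
      have := Complex.norm_mul_exp_arg_mul_I a
      rw [h] at this
      simpa using this.symm
    have heq : (fun ω : ℝ => Real.log (‖Complex.exp (ω * Complex.I) - a‖))
        = fun ω : ℝ => Real.log (2 * |Real.sin ((ω - φ)/2)|) := by
      funext ω; rw [ha2, aux_abs_exp_sub]
    rw [heq]
    exact aux_shifted_int φ t₁ t₂
  · -- |a| ≠ 1 : continuous integrand
    refine Continuous.intervalIntegrable ?_ _ _
    refine Continuous.log ?_ ?_
    · exact continuous_norm.comp ((Complex.continuous_exp.comp (by continuity)).sub continuous_const)
    · intro ω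
      refine norm_ne_zero_iff.mpr fun hzero => h ?_
      have : Complex.exp (ω * Complex.I) = a := by linear_combination hzero
      rw [← this, Complex.norm_exp]
      simp

lemma aux_exp_eq_countable (c : ℂ) : Set.Countable {ω : ℝ | Complex.exp (ω * Complex.I) = c} := by
  rcases Set.eq_empty_or_nonempty {ω : ℝ | Complex.exp (ω * Complex.I) = c} with h | ⟨ω₀, hω₀⟩
  · rw [h]; exact Set.countable_empty
  · refine Set.Countable.mono ?_ (Set.countable_range (fun n : ℤ => ω₀ + n * (2*π)))
    intro ω hω
    have hee : Complex.exp (ω * Complex.I) = Complex.exp (ω₀ * Complex.I) := by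
      rw [hω, hω₀]
    obtain ⟨n, hn⟩ := Complex.exp_eq_exp_iff_exists_int.mp hee
    refine ⟨n, ?_⟩
    have h2 : ((ω₀ + n * (2*π) : ℝ) : ℂ) * Complex.I = (ω : ℂ) * Complex.I := by
      push_cast
      linear_combination -hn
    have h3 := mul_right_cancel₀ Complex.I_ne_zero h2
    exact Complex.ofReal_inj.mp h3

theorem discrete_time_CSBI_biproper (n : ℕ) (K : ℝ) (hK0 : K ≠ 0) (hK : K ≠ -1)
    (z : Fin n → ℂ) (hz : ∀ i, z i ≠ 0)
    (p : Fin n → ℂ)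
    (r : Fin n → ℂ) (hr : ∀ i, ‖r i‖ < 1)
    (L : ℂ → ℂ)
    (hL : ∀ s, L s = (K : ℂ) * (∏ i, (s - z i)) / (∏ i, (s - p i)))
    (hpoly : ∀ s : ℂ, (∏ i, (s - p i)) + (K : ℂ) * (∏ i, (s - z i)) =
        (1 + (K : ℂ)) * ∏ i, (s - r i)) :
    (1 / (2 * π)) * ∫ ω in (-π)..π,
        Real.logb 2 ‖L (Complex.exp ((ω : ℂ) * Complex.I)) /
          (1 + L (Complex.exp ((ω : ℂ) * Complex.I)))‖ =
      (∑ i ∈ Finset.univ.filter (fun i => 1 < ‖z i‖),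
        Real.logb 2 ‖z i‖) + Real.logb 2 |K / (1 + K)| := by
  have hKC : (K : ℂ) ≠ 0 := Complex.ofReal_ne_zero.mpr hK0
  have h1K : (1 : ℂ) + (K : ℂ) ≠ 0 := by
    intro h
    apply hK
    have h2 : (K : ℂ) = -1 := by linear_combination h
    exact_mod_cast h2
  have habsK : ‖(K : ℂ)‖ ≠ 0 := norm_ne_zero_iff.mpr hKC
  have habs1K : ‖1 + (K : ℂ)‖ ≠ 0 := norm_ne_zero_iff.mpr h1K
  -- bad set
  set E : Set ℝ := {ω : ℝ | ∃ i : Fin n, Complex.exp (ω * Complex.I) = p i ∨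
    Complex.exp (ω * Complex.I) = z i} with hE
  have hEc : Set.Countable E := by
    have : E = ⋃ i : Fin n, ({ω : ℝ | Complex.exp (ω * Complex.I) = p i}
        ∪ {ω : ℝ | Complex.exp (ω * Complex.I) = z i}) := by
      ext ω
      simp [hE, Set.mem_iUnion]
    rw [this]
    exact Set.countable_iUnion fun i => (aux_exp_eq_countable (p i)).union (aux_exp_eq_countable (z i))
  have hE_ae : ∀ᵐ ω : ℝ, ω ∉ E := MeasureTheory.measure_eq_zero_iff_ae_notMem.mp (hEc.measure_zero _)
  -- pointwise identity off E
  have hpt : ∀ ω : ℝ, ω ∉ E →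
      Real.log (‖L (Complex.exp ((ω : ℂ) * Complex.I)) /
          (1 + L (Complex.exp ((ω : ℂ) * Complex.I)))‖)
        = Real.log (‖(K : ℂ)/(1 + (K : ℂ))‖)
          + (∑ i, Real.log (‖Complex.exp ((ω : ℂ) * Complex.I) - z i‖))
          - ∑ i, Real.log (‖Complex.exp ((ω : ℂ) * Complex.I) - r i‖) := by
    intro ω hω
    set s : ℂ := Complex.exp ((ω : ℂ) * Complex.I) with hs
    have habss : ‖s‖ = 1 := by rw [hs, Complex.norm_exp]; simp
    have hPi : ∀ i, s - p i ≠ 0 := by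
      intro i h
      rw [hs] at h
      exact hω ⟨i, Or.inl (sub_eq_zero.mp h)⟩
    have hZi : ∀ i, s - z i ≠ 0 := by
      intro i h
      rw [hs] at h
      exact hω ⟨i, Or.inr (sub_eq_zero.mp h)⟩
    have hRi : ∀ i, s - r i ≠ 0 := by
      intro i h
      have heq : s = r i := sub_eq_zero.mp h
      have hlt := hr i
      rw [← heq, habss] at hlt
      exact lt_irrefl 1 hlt
    have hP : (∏ i, (s - p i)) ≠ 0 := Finset.prod_ne_zero_iff.mpr fun i _ => hPi i
    have hZ : (∏ i, (s - z i)) ≠ 0 := Finset.prod_ne_zero_iff.mpr fun i _ => hZi i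
    have hR : (∏ i, (s - r i)) ≠ 0 := Finset.prod_ne_zero_iff.mpr fun i _ => hRi i
    have hT : L s / (1 + L s) = (K : ℂ) * (∏ i, (s - z i)) / ((1 + (K : ℂ)) * ∏ i, (s - r i)) := by
      rw [hL s]
      have h1L : 1 + (K : ℂ) * (∏ i, (s - z i)) / (∏ i, (s - p i))
          = ((1 + (K : ℂ)) * ∏ i, (s - r i)) / (∏ i, (s - p i)) := by
        rw [eq_div_iff hP]
        field_simp
        linear_combination hpoly s
      rw [h1L]
      rw [div_div_div_cancel_right₀]
      exact hP
    rw [hT]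
    rw [norm_div, norm_mul, norm_mul]
    rw [Real.log_div (mul_ne_zero habsK (norm_ne_zero_iff.mpr hZ)) (mul_ne_zero habs1K (norm_ne_zero_iff.mpr hR))]
    rw [Real.log_mul habsK (norm_ne_zero_iff.mpr hZ), Real.log_mul habs1K (norm_ne_zero_iff.mpr hR)]
    rw [norm_prod, norm_prod]
    rw [Real.log_prod (fun i _ => norm_ne_zero_iff.mpr (hZi i)),
      Real.log_prod (fun i _ => norm_ne_zero_iff.mpr (hRi i))]
    rw [norm_div, Real.log_div habsK habs1K]
    ring
  -- convert logb to log
  simp only [Real.logb]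
  rw [intervalIntegral.integral_div]
  -- compute the log-integral
  have hKEY : ∫ ω in (-π)..π, Real.log (‖L (Complex.exp ((ω : ℂ) * Complex.I)) /
      (1 + L (Complex.exp ((ω : ℂ) * Complex.I)))‖)
      = 2*π*(Real.log (‖(K : ℂ)/(1 + (K : ℂ))‖)
          + ∑ i ∈ Finset.univ.filter (fun i => 1 < ‖z i‖), Real.log (‖z i‖)) := by
    have hcongr : ∫ ω in (-π)..π, Real.log (‖L (Complex.exp ((ω : ℂ) * Complex.I)) /
        (1 + L (Complex.exp ((ω : ℂ) * Complex.I)))‖)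
        = ∫ ω in (-π)..π, (Real.log (‖(K : ℂ)/(1 + (K : ℂ))‖)
          + (∑ i, Real.log (‖Complex.exp ((ω : ℂ) * Complex.I) - z i‖))
          - ∑ i, Real.log (‖Complex.exp ((ω : ℂ) * Complex.I) - r i‖)) := by
      refine intervalIntegral.integral_congr_ae ?_
      filter_upwards [hE_ae] with ω hω _
      exact hpt ω hω
    rw [hcongr]
    have hint1 : IntervalIntegrable (fun ω : ℝ => Real.log (‖(K : ℂ)/(1 + (K : ℂ))‖)
        + ∑ i, Real.log (‖Complex.exp ((ω : ℂ) * Complex.I) - z i‖)) volume (-π) π := by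
      refine intervalIntegrable_const.add ?_
      have := IntervalIntegrable.sum (μ := volume) (a := -π) (b := π) Finset.univ
        (f := fun i (ω : ℝ) => Real.log (‖Complex.exp ((ω : ℂ) * Complex.I) - z i‖))
        (fun i _ => aux_jensen_int (z i) (-π) π)
      rw [Finset.sum_fn] at this; exact this
    have hint2 : IntervalIntegrable (fun ω : ℝ =>
        ∑ i, Real.log (‖Complex.exp ((ω : ℂ) * Complex.I) - r i‖)) volume (-π) π := by
      have := IntervalIntegrable.sum (μ := volume) (a := -π) (b := π) Finset.univ
        (f := fun i (ω : ℝ) => Real.log (‖Complex.exp ((ω : ℂ) * Complex.I) - r i‖))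
        (fun i _ => aux_jensen_int (r i) (-π) π)
      rw [Finset.sum_fn] at this; exact this
    rw [intervalIntegral.integral_sub hint1 hint2]
    rw [intervalIntegral.integral_add intervalIntegrable_const (by
      have := IntervalIntegrable.sum (μ := volume) (a := -π) (b := π) Finset.univ
        (f := fun i (ω : ℝ) => Real.log (‖Complex.exp ((ω : ℂ) * Complex.I) - z i‖))
        (fun i _ => aux_jensen_int (z i) (-π) π)
      rw [Finset.sum_fn] at this; exact this)]
    rw [intervalIntegral.integral_finset_sum (fun i _ => aux_jensen_int (z i) (-π) π),
      intervalIntegral.integral_finset_sum (fun i _ => aux_jensen_int (r i) (-π) π)]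
    have hzval : ∀ i : Fin n, ∫ ω in (-π)..π,
        Real.log (‖Complex.exp ((ω : ℂ) * Complex.I) - z i‖)
        = 2*π*Real.log (max 1 (‖z i‖)) := fun i => aux_jensen (z i)
    have hrval : ∀ i : Fin n, ∫ ω in (-π)..π,
        Real.log (‖Complex.exp ((ω : ℂ) * Complex.I) - r i‖) = 0 := by
      intro i
      rw [aux_jensen (r i), max_eq_left (hr i).le]
      simp
    simp only [hzval, hrval, Finset.sum_const_zero, intervalIntegral.integral_const]
    have hsum : ∑ i : Fin n, 2*π*Real.log (max 1 (‖z i‖))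
        = 2*π * ∑ i ∈ Finset.univ.filter (fun i => 1 < ‖z i‖),
            Real.log (‖z i‖) := by
      rw [← Finset.mul_sum]
      congr 1
      rw [← Finset.sum_filter_add_sum_filter_not Finset.univ (fun i => 1 < ‖z i‖)
        (fun i => Real.log (max 1 (‖z i‖)))]
      have hA : ∀ i ∈ Finset.univ.filter (fun i => 1 < ‖z i‖),
          Real.log (max 1 (‖z i‖)) = Real.log (‖z i‖) := by
        intro i hi
        rw [Finset.mem_filter] at hi
        rw [max_eq_right hi.2.le]
      have hB : ∀ i ∈ Finset.univ.filter (fun i => ¬ 1 < ‖z i‖),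
          Real.log (max 1 (‖z i‖)) = 0 := by
        intro i hi
        rw [Finset.mem_filter] at hi
        rw [max_eq_left (not_lt.mp hi.2)]
        simp
      rw [Finset.sum_congr rfl hA, Finset.sum_eq_zero hB]
      simp
    rw [hsum]
    simp
    ring
  rw [hKEY]
  -- final arithmetic
  have habs : ‖(K : ℂ)/(1 + (K : ℂ))‖ = |K / (1 + K)| := by
    rw [show (1 : ℂ) + (K : ℂ) = ((1 + K : ℝ) : ℂ) by push_cast; ring,
      show ((K : ℂ)) = ((K : ℝ) : ℂ) from rfl, ← Complex.ofReal_div, Complex.norm_real, Real.norm_eq_abs]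
  rw [habs]
  have hl2 : Real.log 2 ≠ 0 := by
    have := Real.log_pos (by norm_num : (1:ℝ) < 2)
    linarith
  rw [← Finset.sum_div, ← add_div]
  have hπ : (2*π) ≠ 0 := by positivity
  field_simp
  ring
end
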